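/- A subset of k columns of a superboolean matrix A is independent if and only if the submatrix of A on those columns contains a k×k nonsingular submatrix. -/

import Mathlib

open scoped Classical

/-- The superboolean semiring `SB = {0, 1, 1^ν}`. -/
def SB := Fin 3

instance : DecidableEq SB := inferInstanceAs (DecidableEq (Fin 3))
instance : Fintype SB := inferInstanceAs (Fintype (Fin 3))

def SB.zero : SB := (0 : Fin 3)
def SB.one : SB := (1 : Fin 3)
/-- The ghost element `1^ν`. -/
def SB.nu : SB := (2 : Fin 3)

def SB.val (a : SB) : ℕ := Fin.val a

instance : Zero SB := ⟨SB.zero⟩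
instance : One SB := ⟨SB.one⟩

def SB.add (a b : SB) : SB := (⟨min (a.val + b.val) 2, by omega⟩ : Fin 3)
def SB.mul (a b : SB) : SB := (⟨min (a.val * b.val) 2, by omega⟩ : Fin 3)

instance : Add SB := ⟨SB.add⟩
instance : Mul SB := ⟨SB.mul⟩

instance : AddCommMonoid SB where
  add := (· + ·)
  add_assoc := by decide
  zero_add := by decide
  add_zero := by decide
  add_comm := by decide
  nsmul := nsmulRec

instance : CommMonoid SB where
  mul := (· * ·)
  mul_assoc := by decide
  one_mul := by decide
  mul_one := by decide
  mul_comm := by decide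
  npow := npowRec

/-- The permanent of a square superboolean matrix. -/
def sbPer {n : ℕ} (A : Matrix (Fin n) (Fin n) SB) : SB :=
  ∑ π : Equiv.Perm (Fin n), ∏ i, A (π i) i

/-- A square superboolean matrix is nonsingular when its permanent is `1`. -/
def Nonsingular {n : ℕ} (A : Matrix (Fin n) (Fin n) SB) : Prop := sbPer A = SB.one

/-- Membership in the ghost ideal `{0, 1^ν}`. -/
def SB.IsGhost (a : SB) : Prop := a = SB.zero ∨ a = SB.nu

/-- A family of superboolean vectors is dependent if some nontrivial boolean
combination of them lies entirely in the ghost ideal. -/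
def SBDep {κ ι : Type*} [Fintype κ] (v : κ → ι → SB) : Prop :=
  ∃ α : κ → SB, (∀ k, α k = SB.zero ∨ α k = SB.one) ∧ (∃ k, α k ≠ SB.zero) ∧
    ∀ j : ι, SB.IsGhost (∑ k, α k * v k j)

/-- Independence of a family of superboolean vectors. -/
def SBIndep {κ ι : Type*} [Fintype κ] (v : κ → ι → SB) : Prop := ¬ SBDep v

/-- A matrix is boolean if none of its entries is the ghost `1^ν`. -/
def IsBooleanMat {ι κ : Type*} (A : Matrix ι κ SB) : Prop := ∀ i j, A i j ≠ SB.nu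

namespace SBaux

lemma val_lt (a : SB) : SB.val a < 3 := Fin.is_lt a
lemma val_add (a b : SB) : SB.val (a + b) = min (SB.val a + SB.val b) 2 := rfl
lemma val_mul (a b : SB) : SB.val (a * b) = min (SB.val a * SB.val b) 2 := rfl
lemma val_zero : SB.val 0 = 0 := rfl
lemma val_one : SB.val 1 = 1 := rfl
lemma val_inj {a b : SB} (h : SB.val a = SB.val b) : a = b := Fin.val_injective h
lemma ghost_iff (a : SB) : SB.IsGhost a ↔ SB.val a ≠ 1 := by revert a; simp only [SB.IsGhost]; decide
lemma eq_one_iff (a : SB) : a = SB.one ↔ SB.val a = 1 := by revert a; decide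
lemma eq_zero_iff (a : SB) : a = SB.zero ↔ SB.val a = 0 := by revert a; decide
lemma zero_mul' (b : SB) : SB.zero * b = 0 := by revert b; decide
lemma one_mul' (b : SB) : SB.one * b = b := by revert b; decide

lemma val_sum {ι : Type*} (s : Finset ι) (f : ι → SB) :
    SB.val (∑ i ∈ s, f i) = min (∑ i ∈ s, SB.val (f i)) 2 := by
  classical
  induction s using Finset.cons_induction with
  | empty => simp [val_zero]
  | cons a s ha ih => rw [Finset.sum_cons, Finset.sum_cons, val_add, ih]; omega

lemma val_prod {ι : Type*} (s : Finset ι) (f : ι → SB) :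
    SB.val (∏ i ∈ s, f i) = min (∏ i ∈ s, SB.val (f i)) 2 := by
  classical
  induction s using Finset.cons_induction with
  | empty => simp [val_one]
  | cons a s ha ih =>
    rw [Finset.prod_cons, Finset.prod_cons, val_mul, ih]
    have hx := val_lt (f a)
    set x := SB.val (f a)
    set p := ∏ i ∈ s, SB.val (f i) with hp
    rcases Nat.lt_or_ge p 3 with h | h
    · interval_cases x <;> interval_cases p <;> rfl
    · have h2 : min p 2 = 2 := by omega
      rw [h2]
      rcases Nat.eq_zero_or_pos x with h0 | h0
      · simp [h0]
      · have h3 : 2 ≤ x * p := le_trans (by omega) (Nat.le_mul_of_pos_left p h0)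
        have h4 : 2 ≤ x * 2 := by omega
        omega

lemma nat_sum_eq_one {ι : Type*} {s : Finset ι} {f : ι → ℕ} (h : ∑ i ∈ s, f i = 1) :
    ∃ c ∈ s, f c = 1 ∧ ∀ j ∈ s, j ≠ c → f j = 0 := by
  classical
  have hc : ∃ c ∈ s, f c ≠ 0 := by
    by_contra h'
    push_neg at h'
    rw [Finset.sum_eq_zero h'] at h; omega
  obtain ⟨c, hcs, hfc⟩ := hc
  have hsplit := Finset.add_sum_erase s f hcs
  have h1 : f c = 1 ∧ ∑ j ∈ s.erase c, f j = 0 := by omega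
  refine ⟨c, hcs, h1.1, fun j hjs hjc => ?_⟩
  have := (Finset.sum_eq_zero_iff).mp h1.2 j (Finset.mem_erase.mpr ⟨hjc, hjs⟩)
  exact this

end SBaux
namespace SBaux

lemma perm_eq_one {k : ℕ} (π : Equiv.Perm (Fin k)) (h : ∀ i : Fin k, (i : ℕ) ≤ (π i : ℕ)) :
    π = 1 := by
  have hsum : ∑ i : Fin k, ((π i : ℕ)) = ∑ i : Fin k, (i : ℕ) := Equiv.sum_comp π _
  have hpt := (Finset.sum_eq_sum_iff_of_le (fun i _ => h i)).mp hsum.symm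
  ext i
  have h2 : ((i : ℕ)) = ((π i : ℕ)) := hpt i (Finset.mem_univ i)
  simpa using h2.symm

lemma sbPer_reindex {k : ℕ} (M : Matrix (Fin k) (Fin k) SB) (σ : Equiv.Perm (Fin k)) :
    sbPer (fun i j => M i (σ j)) = sbPer M := by
  unfold sbPer
  refine Fintype.sum_bijective (fun π => π * σ⁻¹) (Equiv.mulRight σ⁻¹).bijective _ _ ?_
  intro π
  exact Fintype.prod_equiv σ _ _ (fun i => by simp)

lemma sbPer_triangular {k : ℕ} (T : Matrix (Fin k) (Fin k) SB)
    (hdiag : ∀ i, T i i = SB.one) (hupper : ∀ i j : Fin k, i < j → T i j = SB.zero) :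
    sbPer T = SB.one := by
  apply val_inj
  unfold sbPer
  rw [val_sum]
  have hterm : ∀ π : Equiv.Perm (Fin k), π ≠ 1 → SB.val (∏ i, T (π i) i) = 0 := by
    intro π hπ
    have : ∃ i, (π i : ℕ) < (i : ℕ) := by
      by_contra hcon
      push_neg at hcon
      exact hπ (perm_eq_one π hcon)
    obtain ⟨i, hi⟩ := this
    have hz : T (π i) i = SB.zero := hupper _ _ (by exact hi)
    rw [val_prod]
    have : ∏ j : Fin k, SB.val (T (π j) j) = 0 :=
      Finset.prod_eq_zero (Finset.mem_univ i) (by rw [hz]; rfl)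
    omega
  have hid : SB.val (∏ i, T ((1 : Equiv.Perm (Fin k)) i) i) = 1 := by
    rw [val_prod]
    have : ∏ i : Fin k, SB.val (T ((1 : Equiv.Perm (Fin k)) i) i) = 1 := by
      apply Finset.prod_eq_one
      intro i _
      show SB.val (T i i) = 1
      rw [hdiag i]; rfl
    omega
  have hsum : ∑ π : Equiv.Perm (Fin k), SB.val (∏ i, T (π i) i) = 1 := by
    rw [Finset.sum_eq_single_of_mem (1 : Equiv.Perm (Fin k)) (Finset.mem_univ _)
      (fun π _ hπ => hterm π hπ)]
    exact hid
  rw [hsum]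
  decide

lemma per_one_unique {k : ℕ} (M : Matrix (Fin k) (Fin k) SB) (h : sbPer M = SB.one) :
    ∃ π₀ : Equiv.Perm (Fin k), (∀ i, SB.val (M (π₀ i) i) = 1) ∧
      ∀ π : Equiv.Perm (Fin k), π ≠ π₀ → ∏ i, SB.val (M (π i) i) = 0 := by
  have hv : SB.val (sbPer M) = 1 := by rw [h]; rfl
  unfold sbPer at hv
  rw [val_sum] at hv
  have hs : ∑ π : Equiv.Perm (Fin k), SB.val (∏ i, M (π i) i) = 1 := by omega
  obtain ⟨π₀, -, h1, h0⟩ := nat_sum_eq_one hs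
  refine ⟨π₀, ?_, ?_⟩
  · intro i
    rw [val_prod] at h1
    have hp : ∏ j : Fin k, SB.val (M (π₀ j) j) = 1 := by omega
    have hdvd : SB.val (M (π₀ i) i) ∣ ∏ j : Fin k, SB.val (M (π₀ j) j) :=
      Finset.dvd_prod_of_mem _ (Finset.mem_univ i)
    rw [hp] at hdvd
    exact Nat.dvd_one.mp hdvd
  · intro π hπ
    have := h0 π (Finset.mem_univ π) hπ
    rw [val_prod] at this
    omega

end SBaux
namespace SBaux

lemma sum_indicator {ι : Type*} [Fintype ι] (α : ι → SB)
    (hb : ∀ s, α s = SB.zero ∨ α s = SB.one) (w : ι → SB) :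
    ∑ s, α s * w s = ∑ s ∈ Finset.univ.filter (fun s => α s = SB.one), w s := by
  classical
  rw [← Finset.sum_filter_add_sum_filter_not Finset.univ (fun s => α s = SB.one)
    (fun s => α s * w s)]
  have h2 : ∑ s ∈ Finset.univ.filter (fun s => ¬ α s = SB.one), α s * w s = 0 := by
    apply Finset.sum_eq_zero
    intro s hs
    have := (Finset.mem_filter.mp hs).2
    rcases hb s with h | h
    · rw [h]; exact zero_mul' _
    · exact absurd h this
  rw [h2, add_zero]
  apply Finset.sum_congr rfl
  intro s hs
  rw [(Finset.mem_filter.mp hs).2]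
  exact one_mul' _

lemma build {m k : ℕ} (B : Fin m → Fin k → SB)
    (h : ∀ S : Finset (Fin k), S.Nonempty → ∃ i, (∑ j ∈ S, B i j) = SB.one) :
    ∀ (n : ℕ) (S : Finset (Fin k)), S.card = n →
      ∃ (e : Fin n → Fin k) (f : Fin n → Fin m),
        (∀ t, e t ∈ S) ∧ Function.Injective e ∧
        (∀ t, B (f t) (e t) = SB.one) ∧
        (∀ t s : Fin n, t < s → B (f t) (e s) = SB.zero) := by
  intro n
  induction n with
  | zero =>
    intro S _
    exact ⟨Fin.elim0, Fin.elim0, fun t => t.elim0, fun t => t.elim0,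
      fun t => t.elim0, fun t => t.elim0⟩
  | succ n ih =>
    intro S hS
    have hne : S.Nonempty := Finset.card_pos.mp (by omega)
    obtain ⟨i, hi⟩ := h S hne
    have hv : ∑ j ∈ S, SB.val (B i j) = 1 := by
      have h1 : min (∑ j ∈ S, SB.val (B i j)) 2 = 1 := by
        have := congrArg SB.val hi
        rwa [val_sum] at this
      omega
    obtain ⟨c, hcS, hc1, hc0⟩ := nat_sum_eq_one hv
    obtain ⟨e', f', he'S, he'inj, hd', ht'⟩ :=
      ih (S.erase c) (by rw [Finset.card_erase_of_mem hcS, hS]; omega)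
    refine ⟨Fin.cons c e', Fin.cons i f', ?_, ?_, ?_, ?_⟩
    · intro t
      refine Fin.cases ?_ ?_ t
      · simpa using hcS
      · intro t'
        simpa using Finset.mem_of_mem_erase (he'S t')
    · intro t s
      refine Fin.cases ?_ ?_ t
      · refine Fin.cases ?_ ?_ s
        · intro _; rfl
        · intro s' hts
          exfalso
          have hce : c = e' s' := by simpa using hts
          exact (Finset.ne_of_mem_erase (he'S s')) hce.symm
      · intro t'
        refine Fin.cases ?_ ?_ s
        · intro hts
          exfalso
          have hce : e' t' = c := by simpa using hts
          exact (Finset.ne_of_mem_erase (he'S t')) hce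
        · intro s' hts
          have hee : e' t' = e' s' := by simpa using hts
          exact congrArg Fin.succ (he'inj hee)
    · intro t
      refine Fin.cases ?_ ?_ t
      · simpa using (eq_one_iff _).mpr hc1
      · intro t'; simpa using hd' t'
    · intro t s
      refine Fin.cases ?_ ?_ s
      · intro hts
        exact absurd hts (by simp)
      · intro s'
        refine Fin.cases ?_ ?_ t
        · intro _
          have hmem := he'S s'
          have h0 : SB.val (B i (e' s')) = 0 :=
            hc0 _ (Finset.mem_of_mem_erase hmem) (Finset.ne_of_mem_erase hmem)
          simpa using (eq_zero_iff _).mpr h0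
        · intro t' hts
          have hlt : t' < s' := by rwa [Fin.succ_lt_succ_iff] at hts
          simpa using ht' t' s' hlt

end SBaux
namespace SBaux

lemma forward {m n k : ℕ} (A : Matrix (Fin m) (Fin n) SB) (g : Fin k → Fin n)
    (hindep : SBIndep (fun j (i : Fin m) => A i (g j))) :
    ∃ f : Fin k → Fin m, Function.Injective f ∧
      Nonsingular (fun i j : Fin k => A (f i) (g j)) := by
  classical
  set B : Fin m → Fin k → SB := fun i j => A i (g j) with hB
  have hwit : ∀ S : Finset (Fin k), S.Nonempty → ∃ i, (∑ j ∈ S, B i j) = SB.one := by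
    intro S hSne
    by_contra hno
    push_neg at hno
    apply hindep
    refine ⟨fun s => if s ∈ S then SB.one else SB.zero, fun s => ?_, ?_, ?_⟩
    · by_cases hs : s ∈ S <;> simp [hs]
    · obtain ⟨s₀, hs₀⟩ := hSne
      refine ⟨s₀, ?_⟩
      have hone : (fun s => if s ∈ S then SB.one else SB.zero) s₀ = SB.one := by
        simp [hs₀]
      rw [hone]
      decide
    · intro j
      have hα : ∀ s : Fin k, (if s ∈ S then SB.one else SB.zero) = SB.zero ∨
          (if s ∈ S then SB.one else SB.zero) = SB.one := by
        intro s; by_cases hs : s ∈ S <;> simp [hs]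
      have h1 : (∑ s : Fin k, (if s ∈ S then SB.one else SB.zero) * B j s)
          = ∑ s ∈ Finset.univ.filter
              (fun s => (if s ∈ S then SB.one else SB.zero) = SB.one), B j s :=
        sum_indicator _ hα _
      have hfe : Finset.univ.filter
          (fun s => (if s ∈ S then SB.one else SB.zero) = SB.one) = S := by
        ext s
        by_cases hs : s ∈ S <;> simp [hs] <;> decide
      rw [hfe] at h1
      have h2 : SB.IsGhost (∑ s : Fin k,
          (if s ∈ S then SB.one else SB.zero) * B j s) := by
        rw [h1, ghost_iff]
        intro hval
        exact hno j ((eq_one_iff _).mpr hval)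
      exact h2
  obtain ⟨e, f, heS, heinj, hdiag, htri⟩ := build B hwit k Finset.univ (by simp)
  have hfinj : Function.Injective f := by
    intro t s hfts
    by_contra hnee
    rcases lt_or_gt_of_ne hnee with hlt | hlt
    · have h0 := htri t s hlt
      have h1 := hdiag s
      rw [← hfts, h0] at h1
      exact absurd h1 (by decide)
    · have h0 := htri s t hlt
      have h1 := hdiag t
      rw [hfts, h0] at h1
      exact absurd h1 (by decide)
  have hebij : Function.Bijective e := Finite.injective_iff_bijective.mp heinj
  let σ : Equiv.Perm (Fin k) := Equiv.ofBijective e hebij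
  refine ⟨f, hfinj, ?_⟩
  show sbPer (fun i j : Fin k => A (f i) (g j)) = SB.one
  rw [← sbPer_reindex (fun i j : Fin k => A (f i) (g j)) σ]
  exact sbPer_triangular _ (fun i => hdiag i) (fun i j hij => htri i j hij)

lemma backward {m n k : ℕ} (A : Matrix (Fin m) (Fin n) SB) (g : Fin k → Fin n)
    (f : Fin k → Fin m) (hns : Nonsingular (fun i j : Fin k => A (f i) (g j))) :
    SBIndep (fun j (i : Fin m) => A i (g j)) := by
  classical
  set M : Matrix (Fin k) (Fin k) SB := fun t s => A (f t) (g s) with hM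
  obtain ⟨π₀, hπ₀, hother⟩ := per_one_unique M hns
  rintro ⟨α, hb, ⟨s₀, hs₀⟩, hghost⟩
  set S : Finset (Fin k) := Finset.univ.filter (fun s => α s = SB.one) with hSdef
  have hs₀S : s₀ ∈ S := by
    rcases hb s₀ with h | h
    · exact absurd h hs₀
    · rw [hSdef]; simp [h]
  have hrow : ∀ t : Fin k, SB.IsGhost (∑ s ∈ S, M t s) := by
    intro t
    have h1 : (∑ s : Fin k, α s * M t s)
        = ∑ s ∈ Finset.univ.filter (fun s => α s = SB.one), M t s :=
      sum_indicator α hb _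
    rw [← hSdef] at h1
    have h2 : SB.IsGhost (∑ s : Fin k, α s * M t s) := hghost (f t)
    rwa [h1] at h2
  have hstep : ∀ t, t ∈ S → ∃ s, s ∈ S ∧ s ≠ t ∧ SB.val (M (π₀ t) s) ≠ 0 := by
    intro t htS
    have hg := (ghost_iff _).mp (hrow (π₀ t))
    rw [val_sum] at hg
    have hvt : SB.val (M (π₀ t) t) = 1 := hπ₀ t
    have hsplit := Finset.add_sum_erase S (fun s => SB.val (M (π₀ t) s)) htS
    have hner : ∑ s ∈ S.erase t, SB.val (M (π₀ t) s) ≠ 0 := by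
      intro h0
      simp only [h0] at hsplit
      omega
    obtain ⟨s, hsmem, hsval⟩ : ∃ s ∈ S.erase t, SB.val (M (π₀ t) s) ≠ 0 := by
      by_contra h'
      push_neg at h'
      exact hner (Finset.sum_eq_zero h')
    exact ⟨s, Finset.mem_of_mem_erase hsmem, Finset.ne_of_mem_erase hsmem, hsval⟩
  have hstep' : ∀ t : Fin k, ∃ s : Fin k,
      (t ∈ S → s ∈ S ∧ s ≠ t ∧ SB.val (M (π₀ t) s) ≠ 0) ∧ (t ∉ S → s = t) := by
    intro t
    by_cases htS : t ∈ S
    · obtain ⟨s, h1, h2, h3⟩ := hstep t htS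
      exact ⟨s, fun _ => ⟨h1, h2, h3⟩, fun h => absurd htS h⟩
    · exact ⟨t, fun h => absurd h htS, fun _ => rfl⟩
  choose τ hτin hτout using hstep'
  have hτS : ∀ t, t ∈ S → τ t ∈ S := fun t ht => (hτin t ht).1
  have hτne : ∀ t, t ∈ S → τ t ≠ t := fun t ht => (hτin t ht).2.1
  have hτval : ∀ t, t ∈ S → SB.val (M (π₀ t) (τ t)) ≠ 0 := fun t ht => (hτin t ht).2.2
  set u : ℕ → Fin k := fun j => τ^[j] s₀ with hu
  have hustep : ∀ j, u (j + 1) = τ (u j) := fun j => Function.iterate_succ_apply' τ j s₀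
  have huS : ∀ j, u j ∈ S := by
    intro j
    induction j with
    | zero => exact hs₀S
    | succ j ih => rw [hustep]; exact hτS _ ih
  have hex : ∃ b : ℕ, ∃ a, a < b ∧ u a = u b := by
    have hni : ¬ Function.Injective (fun j : Fin (k + 1) => u (j : ℕ)) := by
      intro hinj
      have hcard := Fintype.card_le_of_injective _ hinj
      simp only [Fintype.card_fin] at hcard
      omega
    rw [Function.not_injective_iff] at hni
    obtain ⟨x, y, hxy, hne⟩ := hni
    rcases lt_or_gt_of_ne hne with h | h
    · exact ⟨(y : ℕ), (x : ℕ), h, hxy⟩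
    · exact ⟨(x : ℕ), (y : ℕ), h, hxy.symm⟩
  obtain ⟨a, hab, hua⟩ := Nat.find_spec hex
  set b := Nat.find hex with hbdef
  have hmin : ∀ b' < b, ¬ ∃ a', a' < b' ∧ u a' = u b' := fun b' hb' => Nat.find_min hex hb'
  set len := b - a with hlendef
  have hlen2 : 2 ≤ len := by
    rcases Nat.lt_or_ge len 2 with h | h
    · exfalso
      have hb1 : b = a + 1 := by omega
      have : u (a + 1) = τ (u a) := hustep a
      rw [← hb1, ← hua] at this
      exact hτne (u a) (huS a) this.symm
    · exact h
  set l : List (Fin k) := (List.range len).map (fun p => u (b - 1 - p)) with hl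
  have hllen : l.length = len := by simp [hl]
  have hgetl : ∀ (p : ℕ) (hp : p < l.length), l[p] = u (b - 1 - p) := by
    intro p hp
    simp [hl]
  have hnodup : l.Nodup := by
    rw [hl]
    refine List.Nodup.map_on ?_ (List.nodup_range (n := len))
    intro p hp q hq hpq
    rw [List.mem_range] at hp hq
    by_contra hpq'
    rcases lt_or_gt_of_ne hpq' with hlt | hlt
    · exact hmin (b - 1 - p) (by omega) ⟨b - 1 - q, by omega, hpq.symm⟩
    · exact hmin (b - 1 - q) (by omega) ⟨b - 1 - p, by omega, hpq⟩
  set c : Equiv.Perm (Fin k) := l.formPerm with hc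
  have hc_apply : ∀ p : ℕ, p < len → c (u (b - 1 - p)) = u (b - 1 - ((p + 1) % len)) := by
    intro p hp
    have h1 := List.formPerm_apply_getElem l hnodup p (by omega)
    rw [hgetl p (by omega), hgetl ((p + 1) % l.length) (Nat.mod_lt _ (by omega))] at h1
    rwa [hllen] at h1
  have hc_top : c (u a) = u (b - 1) := by
    have h2 := hc_apply (len - 1) (by omega)
    have e1 : len - 1 + 1 = len := by omega
    rw [e1, Nat.mod_self] at h2
    have e2 : b - 1 - (len - 1) = a := by omega
    rw [e2] at h2
    simpa using h2
  have hc_mid : ∀ j, a < j → j < b → c (u j) = u (j - 1) := by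
    intro j hja hjb
    have h2 := hc_apply (b - 1 - j) (by omega)
    have e1 : b - 1 - (b - 1 - j) = j := by omega
    have e2 : b - 1 - j + 1 = b - j := by omega
    have e3 : (b - j) % len = b - j := Nat.mod_eq_of_lt (by omega)
    have e4 : b - 1 - (b - j) = j - 1 := by omega
    rw [e1, e2, e3, e4] at h2
    exact h2
  have hkey : ∀ t, t ∈ l → c t ∈ S ∧ τ (c t) = t := by
    intro t htl
    rw [hl, List.mem_map] at htl
    obtain ⟨p, hp, hpt⟩ := htl
    rw [List.mem_range] at hp
    set j := b - 1 - p with hj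
    have hja : a ≤ j := by omega
    have hjb : j < b := by omega
    rcases Nat.eq_or_lt_of_le hja with heq | hlt
    · rw [← hpt]
      have hj' : j = a := heq.symm
      rw [hj', hc_top]
      refine ⟨huS _, ?_⟩
      have h7 := hustep (b - 1)
      have h8 : b - 1 + 1 = b := by omega
      rw [h8] at h7
      rw [← h7, ← hua]
    · rw [← hpt, hc_mid j hlt hjb]
      refine ⟨huS _, ?_⟩
      have h7 := hustep (j - 1)
      have h8 : j - 1 + 1 = j := by omega
      rw [h8] at h7
      exact h7.symm
  have hentry : ∀ t : Fin k, SB.val (M ((π₀ * c) t) t) ≠ 0 := by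
    intro t
    by_cases htl : t ∈ l
    · obtain ⟨hcS', hτc⟩ := hkey t htl
      show SB.val (M (π₀ (c t)) t) ≠ 0
      have h9 := hτval (c t) hcS'
      rwa [hτc] at h9
    · have hct : c t = t := List.formPerm_apply_of_notMem htl
      show SB.val (M (π₀ (c t)) t) ≠ 0
      rw [hct, hπ₀ t]
      omega
  have hneq : π₀ * c ≠ π₀ := by
    intro heq
    have h1 : π₀ (c (u a)) = π₀ (u a) := by
      rw [← Equiv.Perm.mul_apply, heq]
    have h2 : c (u a) = u a := π₀.injective h1
    rw [hc_top] at h2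
    exact hmin (b - 1) (by omega) ⟨a, by omega, h2.symm⟩
  have h0 := hother (π₀ * c) hneq
  obtain ⟨i, -, hzero⟩ := Finset.prod_eq_zero_iff.mp h0
  exact hentry i hzero

end SBaux

/-- A subset of `k` columns of a superboolean matrix is independent iff the submatrix
on those columns contains a `k × k` nonsingular submatrix. -/
theorem cols_indep_iff_nonsingular_witness {m n k : ℕ} (A : Matrix (Fin m) (Fin n) SB)
    (g : Fin k → Fin n) (hg : Function.Injective g) :
    SBIndep (fun j (i : Fin m) => A i (g j)) ↔
      ∃ f : Fin k → Fin m, Function.Injective f ∧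
        Nonsingular (fun i j : Fin k => A (f i) (g j)) := by
  constructor
  · intro h
    exact SBaux.forward A g h
  · rintro ⟨f, hf, hns⟩
    exact SBaux.backward A g f hns
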